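/- Consider the root game initial position associated to 0^{n-l}1^l-strings σ, μ, ν with parameter N (permutations π_1 = π(σ,N), π_2 = π'(μ,N), π_3 = π''(ν,N) in S_{n+N}). The squares containing a 1-token are exactly the squares S_{a, n-l+c} with 1 ≤ a ≤ n-l, 1 ≤ c ≤ r_a(σ), i.e., they form the Young diagram λ(σ) with lower-left corner at S_{n-l, n-l+1}. -/
import Mathlib


/-- The set of inversions of a word `f` on `Fin n`. -/
def Inversions {n : ℕ} (f : Fin n → Fin n) : Finset (Fin n × Fin n) :=
  Finset.univ.filter fun p => p.1 < p.2 ∧ f p.2 < f p.1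

/-- In the root game initial position, a `1`-token occupies
`S_{ab}` iff `(a,b)` is an inversion of `π₁ = π(σ,N)`.  These squares are
exactly the `S_{a, m+c}` with `a < m` and `c < r_a(σ)` (0-based), i.e. they
form the Young diagram `λ(σ)`. -/
theorem stmt15 (m l N : ℕ) (σ : Fin (m + l) → Bool)
    (i : Fin m → Fin (m + l)) (j : Fin l → Fin (m + l))
    (hi : StrictMono i) (hj : StrictMono j)
    (hzero : ∀ p, σ p = false ↔ ∃ a, i a = p)
    (hone : ∀ p, σ p = true ↔ ∃ c, j c = p)
    (πN : Fin (m + l + N) → Fin (m + l + N))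
    (hπN : ∀ a : Fin (m + l + N), (πN a : ℕ) =
      if h : (a : ℕ) < m + l then ((Fin.append i j ⟨a, h⟩ : Fin (m + l)) : ℕ)
      else (a : ℕ))
    (r : ℕ → ℕ)
    (hr : ∀ (a : ℕ) (h : a < m),
      r a = (Finset.univ.filter fun p => p < i ⟨a, h⟩ ∧ σ p = true).card) :
    ∀ a b : Fin (m + l + N), (a, b) ∈ Inversions πN ↔
      ((a : ℕ) < m ∧ m ≤ (b : ℕ) ∧ (b : ℕ) < m + r (a : ℕ)) := by
  -- value of πN on the three ranges
  have hπlt : ∀ (a : Fin (m+l+N)) (h : (a:ℕ) < m), (πN a : ℕ) = (i ⟨a, h⟩ : ℕ) := by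
    intro a h
    have h' : (a:ℕ) < m + l := lt_of_lt_of_le h (Nat.le_add_right m l)
    rw [hπN, dif_pos h']
    have : (⟨(a:ℕ), h'⟩ : Fin (m+l)) = Fin.castAdd l ⟨a, h⟩ := rfl
    rw [this, Fin.append_left]
  have hπmid : ∀ (a : Fin (m+l+N)) (h2 : (a:ℕ) < m + l) (h1 : m ≤ (a:ℕ)),
      (πN a : ℕ) = (j ⟨(a:ℕ) - m, by omega⟩ : ℕ) := by
    intro a h2 h1
    rw [hπN, dif_pos h2]
    have : (⟨(a:ℕ), h2⟩ : Fin (m+l)) = Fin.natAdd m ⟨(a:ℕ)-m, by omega⟩ := by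
      apply Fin.ext; simp; omega
    rw [this, Fin.append_right]
  have hπhi : ∀ (a : Fin (m+l+N)) (h : m + l ≤ (a:ℕ)), (πN a : ℕ) = a := by
    intro a h; rw [hπN, dif_neg (by omega)]
  -- the set of ones before the a-th zero, as indices
  have hcardS : ∀ (a : ℕ) (ha : a < m),
      r a = (Finset.univ.filter fun c : Fin l => j c < i ⟨a, ha⟩).card := by
    intro a ha
    rw [hr a ha]
    have himg : (Finset.univ.filter fun p => p < i ⟨a, ha⟩ ∧ σ p = true)
        = (Finset.univ.filter fun c : Fin l => j c < i ⟨a, ha⟩).image j := by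
      ext p
      simp only [Finset.mem_filter, Finset.mem_univ, true_and, Finset.mem_image, hone]
      constructor
      · rintro ⟨hp, c, rfl⟩; exact ⟨c, hp, rfl⟩
      · rintro ⟨c, hc, rfl⟩; exact ⟨hc, c, rfl⟩
    rw [himg, Finset.card_image_of_injective _ hj.injective]
  have rle : ∀ (a : ℕ) (ha : a < m), r a ≤ l := by
    intro a ha
    rw [hcardS a ha]
    exact le_trans (Finset.card_filter_le _ _) (by simp)
  -- key: j c < i a ↔ c < r a
  have key : ∀ (a : ℕ) (ha : a < m) (c : Fin l),
      ((j c : ℕ) < (i ⟨a, ha⟩ : ℕ)) ↔ (c : ℕ) < r a := by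
    intro a ha c
    rw [hcardS a ha]
    set S := (Finset.univ.filter fun c : Fin l => j c < i ⟨a, ha⟩) with hS
    constructor
    · intro hc
      have hsub : Finset.Iic c ⊆ S := by
        intro c' hc'
        simp only [Finset.mem_Iic] at hc'
        simp only [hS, Finset.mem_filter, Finset.mem_univ, true_and]
        exact lt_of_le_of_lt (hj.monotone hc') hc
      have := Finset.card_le_card hsub
      rwa [Fin.card_Iic] at this
    · intro hc
      by_contra hcon
      push_neg at hcon
      have hsub : S ⊆ Finset.Iio c := by
        intro c' hc'
        simp only [hS, Finset.mem_filter, Finset.mem_univ, true_and] at hc'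
        simp only [Finset.mem_Iio]
        exact hj.lt_iff_lt.mp (lt_of_lt_of_le hc' hcon)
      have := Finset.card_le_card hsub
      rw [Fin.card_Iio] at this
      omega
  intro a b
  simp only [Inversions, Finset.mem_filter, Finset.mem_univ, true_and, Fin.lt_def]
  constructor
  · rintro ⟨hab, hinv⟩
    rcases lt_or_ge (b : ℕ) m with hb | hb
    · exfalso
      have ha : (a : ℕ) < m := lt_trans hab hb
      rw [hπlt a ha, hπlt b hb] at hinv
      exact absurd (hi (show (⟨a, ha⟩ : Fin m) < ⟨b, hb⟩ from hab)) (by omega)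
    rcases lt_or_ge (b : ℕ) (m + l) with hb2 | hb2
    · have ha : (a : ℕ) < m := by
        by_contra ha
        push_neg at ha
        have ha2 : (a : ℕ) < m + l := lt_trans hab hb2
        rw [hπmid a ha2 ha, hπmid b hb2 hb] at hinv
        have : (⟨(a:ℕ)-m, by omega⟩ : Fin l) < ⟨(b:ℕ)-m, by omega⟩ := by
          simp [Fin.lt_def]; omega
        exact absurd (hj this) (by omega)
      rw [hπlt a ha, hπmid b hb2 hb] at hinv
      have := (key a ha ⟨(b:ℕ)-m, by omega⟩).mp hinv
      simp only at this
      exact ⟨ha, hb, by omega⟩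
    · exfalso
      rw [hπhi b hb2] at hinv
      rcases lt_or_ge (a : ℕ) m with ha | ha
      · rw [hπlt a ha] at hinv
        have := (i ⟨a, ha⟩).isLt
        omega
      rcases lt_or_ge (a : ℕ) (m + l) with ha2 | ha2
      · rw [hπmid a ha2 ha] at hinv
        have := (j ⟨(a:ℕ)-m, by omega⟩).isLt
        omega
      · rw [hπhi a ha2] at hinv; omega
  · rintro ⟨ha, hb1, hb2⟩
    have hrl := rle a ha
    have hb3 : (b : ℕ) < m + l := by omega
    have hab : (a : ℕ) < (b : ℕ) := by omega
    refine ⟨hab, ?_⟩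
    rw [hπlt a ha, hπmid b hb3 hb1]
    exact (key a ha ⟨(b:ℕ)-m, by omega⟩).mpr (by simp; omega)
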